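/- If a real polynomial with nonnegative coefficients is real-rooted, then its coefficient sequence is unimodal. -/

import Mathlib

open Polynomial

/-- Strong log-concavity of a nonnegative sequence. -/
def SLC (a : ℕ → ℝ) : Prop :=
  (∀ k, 0 ≤ a k) ∧ ∀ i j : ℕ, i ≤ j → a i * a (j + 2) ≤ a (i + 1) * a (j + 1)

lemma slc_C (c : ℝ) (hc : 0 ≤ c) : SLC (C c).coeff := by
  constructor
  · intro k
    simp only [coeff_C]
    split <;> simp [hc]
  · intro i j hij
    have h2 : (C c).coeff (j + 2) = 0 := by simp [coeff_C]
    simp only [h2, mul_zero]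
    refine mul_nonneg ?_ ?_ <;> · simp only [coeff_C]; split <;> simp [hc]

lemma slc_step (p : Polynomial ℝ) (s : ℝ) (hs : 0 ≤ s) (hp : SLC p.coeff) :
    SLC (p * (X + C s)).coeff := by
  obtain ⟨hnn, hlc⟩ := hp
  have h0 : (p * (X + C s)).coeff 0 = s * p.coeff 0 := by
    simp [mul_add, coeff_mul_C, mul_comm]
  have hk : ∀ k, (p * (X + C s)).coeff (k + 1) = p.coeff k + s * p.coeff (k + 1) := by
    intro k
    simp [mul_add, coeff_mul_C, coeff_mul_X, mul_comm]
  constructor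
  · intro k
    cases k with
    | zero => rw [h0]; exact mul_nonneg hs (hnn 0)
    | succ k => rw [hk]; exact add_nonneg (hnn k) (mul_nonneg hs (hnn (k + 1)))
  · intro i j hij
    cases i with
    | zero =>
      simp only [h0, hk, zero_add]
      have h1 := hlc 0 j (Nat.zero_le j)
      nlinarith [mul_le_mul_of_nonneg_left h1 (mul_nonneg hs hs),
        mul_nonneg (hnn 0) (hnn j), mul_nonneg hs (mul_nonneg (hnn 1) (hnn j))]
    | succ i =>
      cases j with
      | zero => omega
      | succ j =>
        have hij' : i ≤ j := by omega
        simp only [hk]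
        have h1 : p.coeff i * p.coeff (j + 2) ≤ p.coeff (i + 1) * p.coeff (j + 1) :=
          hlc i j hij'
        have h3 : p.coeff (i + 1) * p.coeff (j + 3) ≤ p.coeff (i + 2) * p.coeff (j + 2) :=
          hlc (i + 1) (j + 1) (by omega)
        have h2 : p.coeff i * p.coeff (j + 3) ≤ p.coeff (i + 2) * p.coeff (j + 1) := by
          rcases eq_or_lt_of_le hij' with rfl | hlt
          · have := hlc i (i + 1) (by omega)
            calc p.coeff i * p.coeff (i + 3) ≤ p.coeff (i + 1) * p.coeff (i + 2) := this
              _ = p.coeff (i + 2) * p.coeff (i + 1) := by ring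
          · calc p.coeff i * p.coeff (j + 3)
                ≤ p.coeff (i + 1) * p.coeff (j + 2) := hlc i (j + 1) (by omega)
              _ ≤ p.coeff (i + 2) * p.coeff (j + 1) := hlc (i + 1) j (by omega)
        have e2 := mul_le_mul_of_nonneg_left h2 hs
        have e3 := mul_le_mul_of_nonneg_left h3 (mul_nonneg hs hs)
        nlinarith [e2, e3, h1]

lemma slc_prod (m : Multiset ℝ) (hm : ∀ r ∈ m, 0 ≤ r) (c : ℝ) (hc : 0 ≤ c) :
    SLC (C c * (m.map fun r => X + C r).prod).coeff := by
  induction m using Multiset.induction_on with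
  | empty => simpa using slc_C c hc
  | cons r m ih =>
    have hr : 0 ≤ r := hm r (Multiset.mem_cons_self r m)
    have hm' : ∀ x ∈ m, 0 ≤ x := fun x hx => hm x (Multiset.mem_cons_of_mem hx)
    have heq : C c * ((r ::ₘ m).map fun r => X + C r).prod
        = (C c * (m.map fun r => X + C r).prod) * (X + C r) := by
      rw [Multiset.map_cons, Multiset.prod_cons]; ring
    rw [heq]
    exact slc_step _ r hr (ih hm')

lemma unimodal_of_slc (a : ℕ → ℝ) (h : SLC a) (N : ℕ) (hN : ∀ k, N ≤ k → a k = 0) :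
    ∃ T, (∀ k, k < T → a k ≤ a (k + 1)) ∧ ∀ k, T ≤ k → a (k + 1) ≤ a k := by
  classical
  by_cases hc : ∀ k, a k ≤ a (k + 1)
  · refine ⟨N, fun k _ => hc k, fun k hk => ?_⟩
    rw [hN (k + 1) (by omega)]
    exact h.1 k
  · push_neg at hc
    refine ⟨Nat.find hc, fun k hk => ?_, fun k hk => ?_⟩
    · by_contra hlt
      push_neg at hlt
      exact Nat.find_min hc hk hlt
    · have hT : a (Nat.find hc + 1) < a (Nat.find hc) := Nat.find_spec hc
      rcases eq_or_lt_of_le hk with rfl | hlt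
      · exact hT.le
      · obtain ⟨j, rfl⟩ := Nat.exists_eq_add_of_lt hlt
        set T := Nat.find hc
        have h1 : a T * a (T + j + 2) ≤ a (T + 1) * a (T + j + 1) := h.2 T (T + j) (by omega)
        have hTpos : 0 < a T := lt_of_le_of_lt (h.1 (T + 1)) hT
        have h2 : a (T + 1) * a (T + j + 1) ≤ a T * a (T + j + 1) :=
          mul_le_mul_of_nonneg_right hT.le (h.1 (T + j + 1))
        have := le_of_mul_le_mul_left (le_trans h1 h2) hTpos
        convert this using 2

theorem realRooted_unimodal (f : Polynomial ℝ)
    (h0 : ∀ k, 0 ≤ f.coeff k)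
    (hrr : ∀ z : ℂ, (f.map (algebraMap ℝ ℂ)).IsRoot z → z.im = 0) :
    ∃ T, (∀ k, k < T → f.coeff k ≤ f.coeff (k + 1)) ∧
      (∀ k, T ≤ k → f.coeff (k + 1) ≤ f.coeff k) := by
  by_cases hf0 : f = 0
  · exact ⟨0, fun k hk => by omega, fun k _ => by simp [hf0]⟩
  have hlc : 0 < f.leadingCoeff :=
    lt_of_le_of_ne (h0 _) (Ne.symm (leadingCoeff_ne_zero.mpr hf0))
  have hpos : ∀ r : ℝ, 0 < r → 0 < f.eval r := by
    intro r hr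
    rw [eval_eq_sum_range]
    refine Finset.sum_pos' (fun i _ => mul_nonneg (h0 i) (pow_nonneg hr.le i)) ?_
    exact ⟨f.natDegree, Finset.self_mem_range_succ _,
      mul_pos hlc (pow_pos hr _)⟩
  set F := f.map (algebraMap ℝ ℂ) with hFdef
  have hF : F = C (algebraMap ℝ ℂ f.leadingCoeff) * (F.roots.map fun z => X - C z).prod :=
    by have h := (IsAlgClosed.splits F).eq_prod_roots; rw [hFdef] at h ⊢; rwa [leadingCoeff_map] at h
  have hreal : ∀ z ∈ F.roots, ((z.re : ℝ) : ℂ) = z := by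
    intro z hz
    have hiz : F.IsRoot z := isRoot_of_mem_roots hz
    have him := hrr z hiz
    exact Complex.ext (by simp) (by simp [him])
  have hrootle : ∀ z ∈ F.roots, z.re ≤ 0 := by
    intro z hz
    have hiz : F.IsRoot z := isRoot_of_mem_roots hz
    have hev : f.eval z.re = 0 := by
      have hh : (algebraMap ℝ ℂ) (f.eval z.re) = 0 := by
        rw [← eval₂_at_apply, ← eval_map, ← hFdef]
        rw [show (algebraMap ℝ ℂ) z.re = ((z.re : ℝ) : ℂ) from rfl]
        rw [hreal z hz]
        exact hiz
      exact (map_eq_zero_iff _ (algebraMap ℝ ℂ).injective).mp hh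
    by_contra hgt
    push_neg at hgt
    exact absurd hev (ne_of_gt (hpos z.re hgt))
  set m : Multiset ℝ := F.roots.map fun z => -z.re with hmdef
  have hm : ∀ r ∈ m, 0 ≤ r := by
    intro r hr
    rw [hmdef, Multiset.mem_map] at hr
    obtain ⟨z, hz, rfl⟩ := hr
    linarith [hrootle z hz]
  have key : f = C f.leadingCoeff * (m.map fun r => X + C r).prod := by
    apply Polynomial.map_injective (algebraMap ℝ ℂ) (algebraMap ℝ ℂ).injective
    rw [Polynomial.map_mul, Polynomial.map_C, Polynomial.map_multiset_prod, hmdef,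
      Multiset.map_map, Multiset.map_map]
    conv_lhs => rw [← hFdef, hF]
    congr 1
    congr 1
    apply Multiset.map_congr rfl
    intro z hz
    simp only [Function.comp_apply, Polynomial.map_add, Polynomial.map_X, Polynomial.map_C]
    rw [map_neg]
    rw [show (algebraMap ℝ ℂ) z.re = z from hreal z hz, map_neg, sub_eq_add_neg]
  have hslc : SLC f.coeff := by
    rw [key]
    exact slc_prod m hm _ hlc.le
  obtain ⟨T, h1, h2⟩ := unimodal_of_slc _ hslc (f.natDegree + 1)
    (fun k hk => coeff_eq_zero_of_natDegree_lt (by omega))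
  exact ⟨T, h1, h2⟩
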